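/- Let x ∈ ℝ^d be a random vector with mean-zero coordinates having finite fourth moments, covariance E[x_q x_r] = σ_{qr} for a symmetric positive semidefinite matrix Σ with operator norm ‖Σ‖ ≤ C, and fourth-cumulant sums κ₄ := sup_{q,r} Σ_{s,t=1}^{d} |κ(x_q, x_r, x_s, x_t)| < ∞. Then for every deterministic matrix B ∈ ℝ^{d×d}, E[ |xᵀ B x − Tr(BΣ)|² ] ≤ (2C² + κ₄) ‖B‖² d, where ‖B‖ is the operator norm of B. -/

import Mathlib

open MeasureTheory Matrix

/-- The ℓ²→ℓ² operator norm of a real matrix. -/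
noncomputable def opNorm {I : Type*} [Fintype I] [DecidableEq I] (A : Matrix I I ℝ) : ℝ :=
  ‖LinearMap.toContinuousLinearMap (Matrix.toEuclideanLin A)‖

variable {d : ℕ}

lemma opNorm_nonneg (A : Matrix (Fin d) (Fin d) ℝ) : 0 ≤ opNorm A := norm_nonneg _

lemma mulVec_sq_le (A : Matrix (Fin d) (Fin d) ℝ) (v : Fin d → ℝ) :
    ∑ i, (A.mulVec v i) ^ 2 ≤ opNorm A ^ 2 * ∑ i, v i ^ 2 := by
  classical
  set w : EuclideanSpace ℝ (Fin d) := (WithLp.equiv 2 _).symm v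
  have h1 : ‖Matrix.toEuclideanLin A w‖ ≤ opNorm A * ‖w‖ := by
    have h := (LinearMap.toContinuousLinearMap (Matrix.toEuclideanLin A)).le_opNorm w
    simp only [LinearMap.coe_toContinuousLinearMap'] at h
    exact h
  have hw : ‖w‖ ^ 2 = ∑ i, v i ^ 2 := by
    rw [EuclideanSpace.norm_eq, Real.sq_sqrt (by positivity)]
    simp [w]
  have hAv : ‖Matrix.toEuclideanLin A w‖ ^ 2 = ∑ i, (A.mulVec v i) ^ 2 := by
    rw [EuclideanSpace.norm_eq, Real.sq_sqrt (by positivity)]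
    simp [Matrix.toEuclideanLin_apply, w]
  calc ∑ i, (A.mulVec v i) ^ 2 = ‖Matrix.toEuclideanLin A w‖ ^ 2 := hAv.symm
    _ ≤ (opNorm A * ‖w‖) ^ 2 := by
        apply pow_le_pow_left₀ (norm_nonneg _) h1
    _ = opNorm A ^ 2 * ∑ i, v i ^ 2 := by rw [mul_pow, hw]

lemma quad_le {C : ℝ} (S : Matrix (Fin d) (Fin d) ℝ) (hC : opNorm S ≤ C) (v : Fin d → ℝ) :
    ∑ s, ∑ t, v s * S s t * v t ≤ C * ∑ s, v s ^ 2 := by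
  have hC0 : 0 ≤ C := le_trans (opNorm_nonneg S) hC
  have key : ∑ s, ∑ t, v s * S s t * v t = ∑ s, v s * S.mulVec v s := by
    refine Finset.sum_congr rfl fun s _ => ?_
    rw [Matrix.mulVec, dotProduct, Finset.mul_sum]
    exact Finset.sum_congr rfl fun t _ => by ring
  rw [key]
  set a := ∑ s, v s * S.mulVec v s with ha
  have h2 : a ^ 2 ≤ (C * ∑ s, v s ^ 2) ^ 2 := by
    calc a ^ 2 ≤ (∑ s, v s ^ 2) * (∑ s, (S.mulVec v s) ^ 2) :=
          Finset.sum_mul_sq_le_sq_mul_sq Finset.univ v (S.mulVec v)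
      _ ≤ (∑ s, v s ^ 2) * (opNorm S ^ 2 * ∑ s, v s ^ 2) := by
          apply mul_le_mul_of_nonneg_left (mulVec_sq_le S v) (by positivity)
      _ ≤ (∑ s, v s ^ 2) * (C ^ 2 * ∑ s, v s ^ 2) := by
          gcongr
          exact opNorm_nonneg S
      _ = (C * ∑ s, v s ^ 2) ^ 2 := by ring
  calc a ≤ |a| := le_abs_self a
    _ = Real.sqrt (a ^ 2) := (Real.sqrt_sq_eq_abs a).symm
    _ ≤ Real.sqrt ((C * ∑ s, v s ^ 2) ^ 2) := Real.sqrt_le_sqrt h2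
    _ = C * ∑ s, v s ^ 2 := Real.sqrt_sq (by positivity)

lemma trace_self_transpose (Q : Matrix (Fin d) (Fin d) ℝ) :
    Matrix.trace (Q * Qᵀ) = ∑ i, ∑ j, Q i j ^ 2 := by
  simp [Matrix.trace, Matrix.mul_apply, Matrix.diag, sq]

lemma trace_QSQt_le {C : ℝ} (S : Matrix (Fin d) (Fin d) ℝ) (hC : opNorm S ≤ C)
    (Q : Matrix (Fin d) (Fin d) ℝ) :
    Matrix.trace (Q * S * Qᵀ) ≤ C * Matrix.trace (Q * Qᵀ) := by
  have h1 : Matrix.trace (Q * S * Qᵀ) = ∑ q, ∑ s, ∑ t, Q q s * S s t * Q q t := by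
    simp only [Matrix.trace, Matrix.diag, Matrix.mul_apply, Matrix.transpose_apply]
    refine Finset.sum_congr rfl fun q _ => ?_
    rw [Finset.sum_comm]
    refine Finset.sum_congr rfl fun s _ => ?_
    rw [Finset.sum_mul]
  rw [h1, trace_self_transpose, Finset.mul_sum]
  exact Finset.sum_le_sum fun q _ => quad_le S hC (fun s => Q q s)

lemma trace_MM_le (M : Matrix (Fin d) (Fin d) ℝ) :
    Matrix.trace (M * M) ≤ Matrix.trace (Mᵀ * M) := by
  have h1 : Matrix.trace (M * M) = ∑ i, ∑ j, M i j * M j i := by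
    simp [Matrix.trace, Matrix.diag, Matrix.mul_apply]
  have h2 : Matrix.trace (Mᵀ * M) = ∑ i, ∑ j, M i j ^ 2 := by
    rw [Matrix.trace_mul_comm, ← trace_self_transpose]
  rw [h1, h2]
  have key : ∀ i j, M i j * M j i ≤ (M i j ^ 2 + M j i ^ 2) / 2 := by
    intro i j; nlinarith [sq_nonneg (M i j - M j i)]
  calc ∑ i, ∑ j, M i j * M j i ≤ ∑ i, ∑ j, (M i j ^ 2 + M j i ^ 2) / 2 :=
        Finset.sum_le_sum fun i _ => Finset.sum_le_sum fun j _ => key i j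
    _ = ∑ i, ∑ j, M i j ^ 2 := by
        simp only [add_div, Finset.sum_add_distrib]
        rw [show (∑ i, ∑ j, M j i ^ 2 / 2) = ∑ i, ∑ j, M i j ^ 2 / 2 from Finset.sum_comm,
          ← Finset.sum_add_distrib]
        simp only [← Finset.sum_add_distrib]
        exact Finset.sum_congr rfl fun i _ => Finset.sum_congr rfl fun j _ => by ring

lemma frob_le (B : Matrix (Fin d) (Fin d) ℝ) :
    ∑ q, ∑ r, B q r ^ 2 ≤ opNorm B ^ 2 * d := by
  have col : ∀ r, ∑ q, B q r ^ 2 ≤ opNorm B ^ 2 := by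
    intro r
    have h := mulVec_sq_le B (fun t => if t = r then 1 else 0)
    have h1 : ∀ q, B.mulVec (fun t => if t = r then 1 else 0) q = B q r := by
      intro q
      simp [Matrix.mulVec, dotProduct]
    simp only [h1] at h
    calc ∑ q, B q r ^ 2 ≤ opNorm B ^ 2 * ∑ i, (if i = r then (1:ℝ) else 0) ^ 2 := h
      _ = opNorm B ^ 2 := by simp
  calc ∑ q, ∑ r, B q r ^ 2 = ∑ r, ∑ q, B q r ^ 2 := Finset.sum_comm
    _ ≤ ∑ _r : Fin d, opNorm B ^ 2 := Finset.sum_le_sum fun r _ => col r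
    _ = opNorm B ^ 2 * d := by simp [mul_comm]

lemma trace_RXR {R S : Matrix (Fin d) (Fin d) ℝ} (hRR : R * R = S)
    (X : Matrix (Fin d) (Fin d) ℝ) :
    Matrix.trace (R * X * R) = Matrix.trace (X * S) := by
  rw [Matrix.trace_mul_cycle, hRR, Matrix.trace_mul_comm]

open scoped MatrixOrder in
lemma psd_sqrt_exists {S : Matrix (Fin d) (Fin d) ℝ} (hpsd : S.PosSemidef) :
    ∃ R : Matrix (Fin d) (Fin d) ℝ, R * R = S ∧ Rᵀ = R := by
  obtain ⟨X, hX, -, hXX⟩ := CFC.exists_sqrt_of_isSelfAdjoint_of_quasispectrumRestricts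
    hpsd.isHermitian (QuasispectrumRestricts.nnreal_of_nonneg hpsd.nonneg)
  refine ⟨X, hXX, ?_⟩
  have h := hX.star_eq
  rwa [Matrix.star_eq_conjTranspose, Matrix.conjTranspose_eq_transpose_of_trivial] at h

lemma gauss_bound {C : ℝ} (S : Matrix (Fin d) (Fin d) ℝ) (hpsd : S.PosSemidef)
    (hC : opNorm S ≤ C) (B : Matrix (Fin d) (Fin d) ℝ) :
    Matrix.trace (Bᵀ * S * B * S) ≤ C ^ 2 * ∑ q, ∑ r, B q r ^ 2 := by
  have hC0 : 0 ≤ C := le_trans (opNorm_nonneg S) hC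
  obtain ⟨R, hRR0, hRt0⟩ := psd_sqrt_exists hpsd
  have hRR : R * R = S := hRR0
  have hRt : Rᵀ = R := by
    exact hRt0
  have e1 : Matrix.trace (Bᵀ * S * B * S) = Matrix.trace ((R * Bᵀ) * S * (R * Bᵀ)ᵀ) := by
    rw [Matrix.transpose_mul, hRt, Matrix.transpose_transpose,
      show (R * Bᵀ) * S * (B * R) = R * (Bᵀ * S * B) * R by noncomm_ring,
      trace_RXR hRR]
  have e2 : Matrix.trace ((R * Bᵀ) * (R * Bᵀ)ᵀ) = Matrix.trace (B * S * Bᵀ) := by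
    rw [Matrix.transpose_mul, hRt, Matrix.transpose_transpose,
      show (R * Bᵀ) * (B * R) = R * (Bᵀ * B) * R by noncomm_ring,
      trace_RXR hRR, Matrix.trace_mul_cycle B S Bᵀ]
  have e3 : Matrix.trace (B * S * Bᵀ) ≤ C * Matrix.trace (B * Bᵀ) := trace_QSQt_le S hC B
  calc Matrix.trace (Bᵀ * S * B * S) = Matrix.trace ((R * Bᵀ) * S * (R * Bᵀ)ᵀ) := e1
    _ ≤ C * Matrix.trace ((R * Bᵀ) * (R * Bᵀ)ᵀ) := trace_QSQt_le S hC (R * Bᵀ)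
    _ = C * Matrix.trace (B * S * Bᵀ) := by rw [e2]
    _ ≤ C * (C * Matrix.trace (B * Bᵀ)) := by
        apply mul_le_mul_of_nonneg_left e3 hC0
    _ = C ^ 2 * ∑ q, ∑ r, B q r ^ 2 := by rw [trace_self_transpose]; ring

lemma gauss_bound2 {C : ℝ} (S : Matrix (Fin d) (Fin d) ℝ) (hpsd : S.PosSemidef)
    (hC : opNorm S ≤ C) (B : Matrix (Fin d) (Fin d) ℝ) :
    Matrix.trace (B * S * B * S) ≤ C ^ 2 * ∑ q, ∑ r, B q r ^ 2 := by
  obtain ⟨R, hRR0, hRt0⟩ := psd_sqrt_exists hpsd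
  have hRR : R * R = S := hRR0
  have hRt : Rᵀ = R := by
    exact hRt0
  set M := R * B * R with hM
  have e1 : Matrix.trace (M * M) = Matrix.trace (B * S * B * S) := by
    rw [hM, show (R * B * R) * (R * B * R) = R * (B * (R * R) * B) * R by noncomm_ring, hRR,
      trace_RXR hRR]
  have e2 : Matrix.trace (Mᵀ * M) = Matrix.trace (Bᵀ * S * B * S) := by
    have hMt : Mᵀ = R * Bᵀ * R := by
      rw [hM, Matrix.transpose_mul, Matrix.transpose_mul, hRt]
      noncomm_ring
    rw [hMt, hM,
      show (R * Bᵀ * R) * (R * B * R) = R * (Bᵀ * (R * R) * B) * R by noncomm_ring, hRR,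
      trace_RXR hRR]
  calc Matrix.trace (B * S * B * S) = Matrix.trace (M * M) := e1.symm
    _ ≤ Matrix.trace (Mᵀ * M) := trace_MM_le M
    _ = Matrix.trace (Bᵀ * S * B * S) := e2
    _ ≤ C ^ 2 * ∑ q, ∑ r, B q r ^ 2 := gauss_bound S hpsd hC B

lemma sum_id1 (S B : Matrix (Fin d) (Fin d) ℝ) (hS : ∀ a b, S a b = S b a) :
    ∑ q, ∑ r, ∑ s, ∑ t, B q r * B s t * (S q s * S r t)
      = Matrix.trace (B * S * Bᵀ * S) := by
  have expand : Matrix.trace (B * S * Bᵀ * S)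
      = ∑ a, ∑ e, ∑ c, ∑ b, B a b * S b c * B e c * S e a := by
    simp only [Matrix.trace, Matrix.diag, Matrix.mul_apply, Matrix.transpose_apply,
      Finset.sum_mul, Finset.mul_sum]
  rw [expand]
  refine Finset.sum_congr rfl fun q _ => ?_
  rw [Finset.sum_comm]
  refine Finset.sum_congr rfl fun s _ => ?_
  rw [Finset.sum_comm]
  refine Finset.sum_congr rfl fun t _ => Finset.sum_congr rfl fun r _ => ?_
  rw [hS s q]
  ring

lemma sum3_rev (f : Fin d → Fin d → Fin d → ℝ) :
    ∑ a, ∑ b, ∑ c, f a b c = ∑ c, ∑ b, ∑ a, f a b c := by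
  conv_lhs => rw [Finset.sum_comm]
  conv_lhs => enter [2, b]; rw [Finset.sum_comm]
  conv_lhs => rw [Finset.sum_comm]

lemma sum_id2 (S B : Matrix (Fin d) (Fin d) ℝ) (hS : ∀ a b, S a b = S b a) :
    ∑ q, ∑ r, ∑ s, ∑ t, B q r * B s t * (S q t * S r s)
      = Matrix.trace (B * S * B * S) := by
  have expand : Matrix.trace (B * S * B * S)
      = ∑ a, ∑ e, ∑ c, ∑ b, B a b * S b c * B c e * S e a := by
    simp only [Matrix.trace, Matrix.diag, Matrix.mul_apply,
      Finset.sum_mul, Finset.mul_sum]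
  rw [expand]
  refine Finset.sum_congr rfl fun q _ => ?_
  conv_rhs => rw [sum3_rev]
  refine Finset.sum_congr rfl fun r _ => Finset.sum_congr rfl fun s _ =>
    Finset.sum_congr rfl fun t _ => ?_
  rw [hS t q]
  ring

lemma sum4_swap (G : Fin d → Fin d → Fin d → Fin d → ℝ) :
    ∑ q, ∑ r, ∑ s, ∑ t, G q r s t = ∑ s, ∑ t, ∑ q, ∑ r, G q r s t := by
  conv_lhs => enter [2, q]; rw [Finset.sum_comm]
  conv_lhs => rw [Finset.sum_comm]
  conv_lhs => enter [2, s, 2, q]; rw [Finset.sum_comm]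
  conv_lhs => enter [2, s]; rw [Finset.sum_comm]

lemma cum_bound {κ₄ : ℝ} (K : Fin d → Fin d → Fin d → Fin d → ℝ)
    (hsym : ∀ q r s t, K s t q r = K q r s t)
    (hκ : ∀ q r, ∑ s, ∑ t, |K q r s t| ≤ κ₄) (B : Matrix (Fin d) (Fin d) ℝ) :
    ∑ q, ∑ r, ∑ s, ∑ t, B q r * B s t * K q r s t ≤ κ₄ * ∑ q, ∑ r, B q r ^ 2 := by
  have step1 : ∑ q, ∑ r, ∑ s, ∑ t, B q r * B s t * K q r s t
      ≤ ∑ q, ∑ r, ∑ s, ∑ t, (B q r ^ 2 + B s t ^ 2) / 2 * |K q r s t| := by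
    refine Finset.sum_le_sum fun q _ => Finset.sum_le_sum fun r _ =>
      Finset.sum_le_sum fun s _ => Finset.sum_le_sum fun t _ => ?_
    calc B q r * B s t * K q r s t ≤ |B q r * B s t * K q r s t| := le_abs_self _
      _ = |B q r * B s t| * |K q r s t| := by rw [abs_mul]
      _ ≤ (B q r ^ 2 + B s t ^ 2) / 2 * |K q r s t| := by
          apply mul_le_mul_of_nonneg_right _ (abs_nonneg _)
          rw [abs_mul]
          nlinarith [sq_nonneg (|B q r| - |B s t|), sq_abs (B q r), sq_abs (B s t),
            abs_nonneg (B q r), abs_nonneg (B s t)]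
  have step2 : ∑ q, ∑ r, ∑ s, ∑ t, (B q r ^ 2 + B s t ^ 2) / 2 * |K q r s t|
      = ∑ q, ∑ r, ∑ s, ∑ t, B q r ^ 2 * |K q r s t| := by
    have swap : ∑ q, ∑ r, ∑ s, ∑ t, B s t ^ 2 * |K q r s t|
        = ∑ q, ∑ r, ∑ s, ∑ t, B q r ^ 2 * |K q r s t| := by
      rw [sum4_swap (fun q r s t => B s t ^ 2 * |K q r s t|)]
      refine Finset.sum_congr rfl fun q _ => Finset.sum_congr rfl fun r _ =>
        Finset.sum_congr rfl fun s _ => Finset.sum_congr rfl fun t _ => ?_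
      rw [hsym]
    have expand : ∑ q, ∑ r, ∑ s, ∑ t, (B q r ^ 2 + B s t ^ 2) / 2 * |K q r s t|
        = (∑ q, ∑ r, ∑ s, ∑ t, B q r ^ 2 * |K q r s t|) / 2
          + (∑ q, ∑ r, ∑ s, ∑ t, B s t ^ 2 * |K q r s t|) / 2 := by
      calc ∑ q, ∑ r, ∑ s, ∑ t, (B q r ^ 2 + B s t ^ 2) / 2 * |K q r s t|
          = ∑ q, ∑ r, ∑ s, ∑ t,
              (B q r ^ 2 * |K q r s t| / 2 + B s t ^ 2 * |K q r s t| / 2) :=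
            Finset.sum_congr rfl fun q _ => Finset.sum_congr rfl fun r _ =>
              Finset.sum_congr rfl fun s _ => Finset.sum_congr rfl fun t _ => by ring
        _ = (∑ q, ∑ r, ∑ s, ∑ t, B q r ^ 2 * |K q r s t| / 2)
            + ∑ q, ∑ r, ∑ s, ∑ t, B s t ^ 2 * |K q r s t| / 2 := by
            simp only [Finset.sum_add_distrib]
        _ = (∑ q, ∑ r, ∑ s, ∑ t, B q r ^ 2 * |K q r s t|) / 2
            + (∑ q, ∑ r, ∑ s, ∑ t, B s t ^ 2 * |K q r s t|) / 2 := by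
            simp only [← Finset.sum_div]
    rw [expand, swap]
    ring
  calc ∑ q, ∑ r, ∑ s, ∑ t, B q r * B s t * K q r s t
      ≤ ∑ q, ∑ r, ∑ s, ∑ t, (B q r ^ 2 + B s t ^ 2) / 2 * |K q r s t| := step1
    _ = ∑ q, ∑ r, ∑ s, ∑ t, B q r ^ 2 * |K q r s t| := step2
    _ = ∑ q, ∑ r, B q r ^ 2 * (∑ s, ∑ t, |K q r s t|) := by
        simp only [Finset.mul_sum]
    _ ≤ ∑ q, ∑ r, B q r ^ 2 * κ₄ := by
        refine Finset.sum_le_sum fun q _ => Finset.sum_le_sum fun r _ => ?_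
        exact mul_le_mul_of_nonneg_left (hκ q r) (sq_nonneg _)
    _ = κ₄ * ∑ q, ∑ r, B q r ^ 2 := by
        simp only [← Finset.sum_mul]
        ring

open ENNReal in
lemma memℒp_mul2 {Ω : Type*} [MeasurableSpace Ω] {μ : Measure Ω} {f g : Ω → ℝ}
    (hf : MemLp f 4 μ) (hg : MemLp g 4 μ) : MemLp (fun ω => f ω * g ω) 2 μ := by
  have h4 : (1 : ℝ≥0∞) / 2 = 1 / 4 + 1 / 4 := by
    rw [ENNReal.div_add_div_same, ENNReal.div_eq_div_iff] <;> norm_num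
  have : ENNReal.HolderTriple 4 4 2 := ⟨by simpa only [one_div] using h4.symm⟩
  have h := MemLp.smul (𝕜 := ℝ) (r := 2) hg hf
  exact h.ae_eq (Filter.Eventually.of_forall fun ω => by simp [smul_eq_mul])

open ENNReal in
lemma integrable_mul2 {Ω : Type*} [MeasurableSpace Ω] {μ : Measure Ω} {f g : Ω → ℝ}
    (hf : MemLp f 2 μ) (hg : MemLp g 2 μ) : Integrable (fun ω => f ω * g ω) μ := by
  have h12 : (1 : ℝ≥0∞) / 1 = 1 / 2 + 1 / 2 := by
    rw [ENNReal.div_add_div_same, ENNReal.div_eq_div_iff] <;> norm_num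
  have : ENNReal.HolderTriple 2 2 1 := ⟨by simpa only [one_div, inv_one] using h12.symm⟩
  have h := MemLp.smul (𝕜 := ℝ) (r := 1) hg hf
  rw [← memLp_one_iff_integrable]
  exact h.ae_eq (Filter.Eventually.of_forall fun ω => by simp [smul_eq_mul])

/-- concentration of quadratic forms, `k = 1` case: if `x ∈ ℝ^d` has mean-zero
coordinates with finite fourth moments, covariance `Σ` symmetric PSD with `‖Σ‖ ≤ C`, and
fourth-cumulant sums bounded by `κ₄`, then for every deterministic `B`,
`E|xᵀBx − Tr(BΣ)|² ≤ (2C² + κ₄) ‖B‖² d`. -/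
theorem stmt_8 (d : ℕ) (C κ₄ : ℝ)
    (Ω : Type*) [MeasurableSpace Ω] (μ : Measure Ω) [IsProbabilityMeasure μ]
    (x : Ω → (Fin d → ℝ)) (hmeas : Measurable x)
    (hL4 : ∀ q, MemLp (fun ω => x ω q) 4 μ)
    (hmean : ∀ q, ∫ ω, x ω q ∂μ = 0)
    (S : Matrix (Fin d) (Fin d) ℝ) (hpsd : S.PosSemidef) (hC : opNorm S ≤ C)
    (hcov : ∀ q r, ∫ ω, x ω q * x ω r ∂μ = S q r)
    (hκ₄ : ∀ q r, (∑ s, ∑ t,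
        |(∫ ω, x ω q * x ω r * x ω s * x ω t ∂μ)
          - (∫ ω, x ω q * x ω r ∂μ) * (∫ ω, x ω s * x ω t ∂μ)
          - (∫ ω, x ω q * x ω s ∂μ) * (∫ ω, x ω r * x ω t ∂μ)
          - (∫ ω, x ω q * x ω t ∂μ) * (∫ ω, x ω r * x ω s ∂μ)|) ≤ κ₄)
    (B : Matrix (Fin d) (Fin d) ℝ) :
    (∫ ω, ((∑ q, ∑ r, x ω q * B q r * x ω r) - Matrix.trace (B * S)) ^ 2 ∂μ)
      ≤ (2 * C ^ 2 + κ₄) * opNorm B ^ 2 * d := by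
  classical
  rcases Nat.eq_zero_or_pos d with hd | hd
  · subst hd
    simp [Matrix.trace]
  -- abbreviations
  have hS : ∀ a b, S a b = S b a := by
    intro a b
    have h := hpsd.isHermitian
    rw [Matrix.IsHermitian] at h
    conv_lhs => rw [← h]
    simp [Matrix.conjTranspose_apply]
  set E4 : Fin d → Fin d → Fin d → Fin d → ℝ :=
    fun q r s t => ∫ ω, x ω q * x ω r * x ω s * x ω t ∂μ with hE4
  set K : Fin d → Fin d → Fin d → Fin d → ℝ := fun q r s t =>
    E4 q r s t
      - (∫ ω, x ω q * x ω r ∂μ) * (∫ ω, x ω s * x ω t ∂μ)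
      - (∫ ω, x ω q * x ω s ∂μ) * (∫ ω, x ω r * x ω t ∂μ)
      - (∫ ω, x ω q * x ω t ∂μ) * (∫ ω, x ω r * x ω s ∂μ) with hK
  -- integrability
  have hm2 : ∀ q r, MemLp (fun ω => x ω q * x ω r) 2 μ :=
    fun q r => memℒp_mul2 (hL4 q) (hL4 r)
  have hi2 : ∀ q r, Integrable (fun ω => x ω q * x ω r) μ := fun q r =>
    integrable_mul2 ((hL4 q).mono_exponent (by norm_num))
      ((hL4 r).mono_exponent (by norm_num))
  have hi4 : ∀ q r s t, Integrable (fun ω => x ω q * x ω r * x ω s * x ω t) μ := by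
    intro q r s t
    have h := integrable_mul2 (hm2 q r) (hm2 s t)
    have heq : (fun ω => (x ω q * x ω r) * (x ω s * x ω t))
        = fun ω => x ω q * x ω r * x ω s * x ω t := funext fun ω => by ring
    rwa [heq] at h
  have hsummand_int : ∀ q r, Integrable (fun ω => x ω q * B q r * x ω r) μ := by
    intro q r
    have h := (hi2 q r).const_mul (B q r)
    have heq : (fun ω => B q r * (x ω q * x ω r)) = fun ω => x ω q * B q r * x ω r :=
      funext fun ω => by ring
    rwa [heq] at h
  have h4summand_int : ∀ q r s t,
      Integrable (fun ω => B q r * B s t * (x ω q * x ω r * x ω s * x ω t)) μ :=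
    fun q r s t => (hi4 q r s t).const_mul _
  have hYint : Integrable (fun ω => ∑ q, ∑ r, x ω q * B q r * x ω r) μ :=
    integrable_finset_sum _ fun q _ => integrable_finset_sum _ fun r _ => hsummand_int q r
  have hF4int : Integrable
      (fun ω => ∑ q, ∑ r, ∑ s, ∑ t, B q r * B s t * (x ω q * x ω r * x ω s * x ω t)) μ :=
    integrable_finset_sum _ fun q _ => integrable_finset_sum _ fun r _ =>
      integrable_finset_sum _ fun s _ => integrable_finset_sum _ fun t _ =>
        h4summand_int q r s t
  set m := Matrix.trace (B * S) with hm
  have hmS : m = ∑ q, ∑ r, B q r * S q r := by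
    rw [hm]
    simp only [Matrix.trace, Matrix.diag, Matrix.mul_apply]
    exact Finset.sum_congr rfl fun q _ => Finset.sum_congr rfl fun r _ => by rw [hS r q]
  have hEY : ∫ ω, ∑ q, ∑ r, x ω q * B q r * x ω r ∂μ = m := by
    rw [integral_finset_sum _ fun q _ => integrable_finset_sum _ fun r _ => hsummand_int q r]
    rw [hmS]
    refine Finset.sum_congr rfl fun q _ => ?_
    rw [integral_finset_sum _ fun r _ => hsummand_int q r]
    refine Finset.sum_congr rfl fun r _ => ?_
    have heq : (fun ω => x ω q * B q r * x ω r) = fun ω => B q r * (x ω q * x ω r) :=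
      funext fun ω => by ring
    rw [heq, integral_const_mul, hcov]
  have hEF4 : ∫ ω, ∑ q, ∑ r, ∑ s, ∑ t, B q r * B s t * (x ω q * x ω r * x ω s * x ω t) ∂μ
      = ∑ q, ∑ r, ∑ s, ∑ t, B q r * B s t * E4 q r s t := by
    rw [integral_finset_sum _ fun q _ => integrable_finset_sum _ fun r _ =>
      integrable_finset_sum _ fun s _ => integrable_finset_sum _ fun t _ => h4summand_int q r s t]
    refine Finset.sum_congr rfl fun q _ => ?_
    rw [integral_finset_sum _ fun r _ => integrable_finset_sum _ fun s _ =>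
      integrable_finset_sum _ fun t _ => h4summand_int q r s t]
    refine Finset.sum_congr rfl fun r _ => ?_
    rw [integral_finset_sum _ fun s _ => integrable_finset_sum _ fun t _ => h4summand_int q r s t]
    refine Finset.sum_congr rfl fun s _ => ?_
    rw [integral_finset_sum _ fun t _ => h4summand_int q r s t]
    exact Finset.sum_congr rfl fun t _ => integral_const_mul _ _
  -- pointwise expansion
  have hpt : (fun ω => ((∑ q, ∑ r, x ω q * B q r * x ω r) - m) ^ 2)
      = fun ω => (∑ q, ∑ r, ∑ s, ∑ t, B q r * B s t * (x ω q * x ω r * x ω s * x ω t))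
          - 2 * m * (∑ q, ∑ r, x ω q * B q r * x ω r) + m ^ 2 := by
    funext ω
    have hYsq : (∑ q, ∑ r, x ω q * B q r * x ω r) ^ 2
        = ∑ q, ∑ r, ∑ s, ∑ t, B q r * B s t * (x ω q * x ω r * x ω s * x ω t) := by
      rw [sq, Finset.sum_mul_sum]
      refine Finset.sum_congr rfl fun q _ => ?_
      calc ∑ s, (∑ r, x ω q * B q r * x ω r) * (∑ t, x ω s * B s t * x ω t)
          = ∑ s, ∑ r, ∑ t, (x ω q * B q r * x ω r) * (x ω s * B s t * x ω t) :=
            Finset.sum_congr rfl fun s _ => Finset.sum_mul_sum _ _ _ _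
        _ = ∑ r, ∑ s, ∑ t, (x ω q * B q r * x ω r) * (x ω s * B s t * x ω t) :=
            Finset.sum_comm
        _ = ∑ r, ∑ s, ∑ t, B q r * B s t * (x ω q * x ω r * x ω s * x ω t) :=
            Finset.sum_congr rfl fun r _ => Finset.sum_congr rfl fun s _ =>
              Finset.sum_congr rfl fun t _ => by ring
    rw [← hYsq]
    ring
  -- value of the integral
  have hconstmul : Integrable (fun ω => 2 * m * (∑ q, ∑ r, x ω q * B q r * x ω r)) μ :=
    hYint.const_mul (2 * m)
  have hsubint : Integrable (fun ω =>
      (∑ q, ∑ r, ∑ s, ∑ t, B q r * B s t * (x ω q * x ω r * x ω s * x ω t))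
        - 2 * m * (∑ q, ∑ r, x ω q * B q r * x ω r)) μ := hF4int.sub hconstmul
  have hLHS : (∫ ω, ((∑ q, ∑ r, x ω q * B q r * x ω r) - m) ^ 2 ∂μ)
      = (∑ q, ∑ r, ∑ s, ∑ t, B q r * B s t * E4 q r s t) - m ^ 2 := by
    rw [hpt, integral_add hsubint (integrable_const _),
      integral_sub hF4int hconstmul, integral_const_mul, hEY, hEF4, integral_const]
    simp only [measure_univ, ENNReal.toReal_one, smul_eq_mul, one_mul, probReal_univ]
    ring
  have hmsq : m ^ 2 = ∑ q, ∑ r, ∑ s, ∑ t, B q r * B s t * (S q r * S s t) := by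
    rw [hmS, sq, Finset.sum_mul_sum]
    refine Finset.sum_congr rfl fun q _ => ?_
    calc ∑ s, (∑ r, B q r * S q r) * (∑ t, B s t * S s t)
        = ∑ s, ∑ r, ∑ t, (B q r * S q r) * (B s t * S s t) :=
          Finset.sum_congr rfl fun s _ => Finset.sum_mul_sum _ _ _ _
      _ = ∑ r, ∑ s, ∑ t, (B q r * S q r) * (B s t * S s t) := Finset.sum_comm
      _ = ∑ r, ∑ s, ∑ t, B q r * B s t * (S q r * S s t) :=
          Finset.sum_congr rfl fun r _ => Finset.sum_congr rfl fun s _ =>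
            Finset.sum_congr rfl fun t _ => by ring
  have hsplit : (∑ q, ∑ r, ∑ s, ∑ t, B q r * B s t * E4 q r s t) - m ^ 2
      = (∑ q, ∑ r, ∑ s, ∑ t, B q r * B s t * K q r s t)
        + ((∑ q, ∑ r, ∑ s, ∑ t, B q r * B s t * (S q s * S r t))
          + (∑ q, ∑ r, ∑ s, ∑ t, B q r * B s t * (S q t * S r s))) := by
    rw [hmsq]
    simp only [← Finset.sum_sub_distrib, ← Finset.sum_add_distrib]
    refine Finset.sum_congr rfl fun q _ => Finset.sum_congr rfl fun r _ =>
      Finset.sum_congr rfl fun s _ => Finset.sum_congr rfl fun t _ => ?_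
    simp only [hK]
    rw [hcov q r, hcov s t, hcov q s, hcov r t, hcov q t, hcov r s]
    ring
  -- cumulant bound
  have hE4sym : ∀ q r s t, E4 s t q r = E4 q r s t := by
    intro q r s t
    simp only [hE4]
    refine integral_congr_ae (Filter.Eventually.of_forall fun ω => ?_)
    ring
  have hKsym : ∀ q r s t, K s t q r = K q r s t := by
    intro q r s t
    simp only [hK]
    rw [hE4sym q r s t, hcov s t, hcov q r, hcov s q, hcov t r, hcov s r, hcov t q,
      hcov q s, hcov r t, hcov q t, hcov r s, hS s q, hS t r, hS s r, hS t q]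
    ring
  have hK4 : ∀ q r, ∑ s, ∑ t, |K q r s t| ≤ κ₄ := by
    intro q r
    simpa only [hK, hE4] using hκ₄ q r
  have hT1 : (∑ q, ∑ r, ∑ s, ∑ t, B q r * B s t * K q r s t)
      ≤ κ₄ * ∑ q, ∑ r, B q r ^ 2 := cum_bound K hKsym hK4 B
  -- gaussian bounds
  have hT2 : (∑ q, ∑ r, ∑ s, ∑ t, B q r * B s t * (S q s * S r t))
      ≤ C ^ 2 * ∑ q, ∑ r, B q r ^ 2 := by
    rw [sum_id1 S B hS]
    have hG1 := gauss_bound S hpsd hC Bᵀ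
    rw [Matrix.transpose_transpose] at hG1
    have hFt : (∑ q, ∑ r, (Bᵀ q r) ^ 2) = ∑ q, ∑ r, B q r ^ 2 := by
      simp only [Matrix.transpose_apply]
      exact Finset.sum_comm
    rwa [hFt] at hG1
  have hT3 : (∑ q, ∑ r, ∑ s, ∑ t, B q r * B s t * (S q t * S r s))
      ≤ C ^ 2 * ∑ q, ∑ r, B q r ^ 2 := by
    rw [sum_id2 S B hS]
    exact gauss_bound2 S hpsd hC B
  have hκpos : 0 ≤ κ₄ := by
    refine le_trans ?_ (hκ₄ ⟨0, hd⟩ ⟨0, hd⟩)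
    positivity
  have hF : (∑ q, ∑ r, B q r ^ 2) ≤ opNorm B ^ 2 * d := frob_le B
  calc (∫ ω, ((∑ q, ∑ r, x ω q * B q r * x ω r) - m) ^ 2 ∂μ)
      = (∑ q, ∑ r, ∑ s, ∑ t, B q r * B s t * E4 q r s t) - m ^ 2 := hLHS
    _ = (∑ q, ∑ r, ∑ s, ∑ t, B q r * B s t * K q r s t)
        + ((∑ q, ∑ r, ∑ s, ∑ t, B q r * B s t * (S q s * S r t))
          + (∑ q, ∑ r, ∑ s, ∑ t, B q r * B s t * (S q t * S r s))) := hsplit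
    _ ≤ κ₄ * (∑ q, ∑ r, B q r ^ 2)
        + (C ^ 2 * (∑ q, ∑ r, B q r ^ 2) + C ^ 2 * (∑ q, ∑ r, B q r ^ 2)) := by
        gcongr ?_ + (?_ + ?_) <;> assumption
    _ = (2 * C ^ 2 + κ₄) * (∑ q, ∑ r, B q r ^ 2) := by ring
    _ ≤ (2 * C ^ 2 + κ₄) * (opNorm B ^ 2 * d) := by
        apply mul_le_mul_of_nonneg_left hF
        positivity
    _ = (2 * C ^ 2 + κ₄) * opNorm B ^ 2 * d := by ring
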